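/- arXiv:math/0606160 — 2 statements merged into one kernel-verified Lean document; each statement's English description precedes it below -/
import Mathlib

section
/- The map h ↦ (x_+(h), u_+(h)) is a one-to-one map of the interval (0,m) onto 𝒢_+, and its inverse is the map 𝒢_+ ∋ (x,u) ↦ h_+(x,u) := G(x−) + u·(G(x) − G(x−)) ∈ (0,m). Similarly, the map h ↦ (x_−(h), u_−(h)) is a one-to-one map of (0,m) onto 𝒢_−, with inverse 𝒢_− ∋ (x,u) ↦ h_−(x,u) := G(x+) + u·(G(x) − G(x+)) ∈ (0,m). -/
open MeasureTheory ProbabilityTheory Set Filter Function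
open scoped ENNReal NNReal Topology

noncomputable section

namespace PinelisTtest

variable {Ω : Type*} [MeasurableSpace Ω]

/-- The function `G` from the paper: `G x = E[X 1{X ∈ (0,x]}]` for `x ≥ 0`,
`G x = E[(-X) 1{X ∈ [x,0)}]` for `x < 0`. -/
def G (P : Measure Ω) (X : Ω → ℝ) (x : ℝ) : ℝ :=
  if 0 ≤ x then ∫ ω, (if X ω ∈ Set.Ioc (0:ℝ) x then X ω else 0) ∂P
  else ∫ ω, (if X ω ∈ Set.Ico x (0:ℝ) then -(X ω) else 0) ∂P

/-- `m := (1/2) E|X|`. -/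
def mHalf (P : Measure Ω) (X : Ω → ℝ) : ℝ := (1/2) * ∫ ω, |X ω| ∂P

/-- `G` extended to `[-∞,∞]`, with `G(±∞) = m`. -/
def Gbar (P : Measure Ω) (X : Ω → ℝ) (x : EReal) : ℝ :=
  if x = ⊤ ∨ x = ⊥ then mHalf P X else G P X x.toReal

/-- `x_+(h) := inf {x ∈ [0,∞] : G(x) ≥ h}`. -/
def xPlus (P : Measure Ω) (X : Ω → ℝ) (h : ℝ) : EReal :=
  sInf {x : EReal | 0 ≤ x ∧ h ≤ Gbar P X x}

/-- `x_-(h) := sup {x ∈ [-∞,0] : G(x) ≥ h}`. -/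
def xMinus (P : Measure Ω) (X : Ω → ℝ) (h : ℝ) : EReal :=
  sSup {x : EReal | x ≤ 0 ∧ h ≤ Gbar P X x}

/-- `w(h) := x_+(h) - x_-(h)`. -/
def wFun (P : Measure Ω) (X : Ω → ℝ) (h : ℝ) : EReal := xPlus P X h - xMinus P X h

/-- `V := {w(h) : h ∈ (0,m]}`. -/
def V (P : Measure Ω) (X : Ω → ℝ) : Set EReal := wFun P X '' Set.Ioc 0 (mHalf P X)

/-- `h_+(x,u) := G(x-) + u (G(x) - G(x-))`. -/
def hPlus (P : Measure Ω) (X : Ω → ℝ) (x u : ℝ) : ℝ :=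
  leftLim (G P X) x + u * (G P X x - leftLim (G P X) x)

/-- `h_-(x,u) := G(x+) + u (G(x) - G(x+))`. -/
def hMinus (P : Measure Ω) (X : Ω → ℝ) (x u : ℝ) : ℝ :=
  rightLim (G P X) x + u * (G P X x - rightLim (G P X) x)

/-- `H(x,u)`. -/
def H (P : Measure Ω) (X : Ω → ℝ) (x u : ℝ) : ℝ :=
  if 0 ≤ x then hPlus P X x u else hMinus P X x u

/-- The reciprocating function `r(x,u)` (real-valued; the extended value is converted
by `EReal.toReal`, which only matters off the almost-sure good set). -/
def recip (P : Measure Ω) (X : Ω → ℝ) (x u : ℝ) : ℝ :=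
  if 0 ≤ x then (xMinus P X (H P X x u)).toReal else (xPlus P X (H P X x u)).toReal

/-- `U_X(ω) := U(ω)` if `P(X = X(ω)) ≠ 0`, and `:= 1` otherwise. -/
def UX (P : Measure Ω) (X U : Ω → ℝ) (ω : Ω) : ℝ :=
  if P {ω' | X ω' = X ω} ≠ 0 then U ω else 1

/-- `W := |X - r(X, U_X)|`. -/
def W (P : Measure Ω) (X U : Ω → ℝ) (ω : Ω) : ℝ :=
  |X ω - recip P X (X ω) (UX P X U ω)|

/-- `Y := |X ⬝ r(X, U_X)|`. -/
def Yf (P : Measure Ω) (X U : Ω → ℝ) (ω : Ω) : ℝ :=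
  |X ω * recip P X (X ω) (UX P X U ω)|

/-- `U` is uniformly distributed on `[0,1]`. -/
def IsUniform01 (P : Measure Ω) (U : Ω → ℝ) : Prop :=
  P.map U = volume.restrict (Set.Icc (0:ℝ) 1)

/-- `M_+`. -/
def Mplus (P : Measure Ω) (X : Ω → ℝ) : Set ℝ :=
  {x | 0 < x ∧ ∀ y < x, 0 < P {ω | X ω ∈ Set.Ioc y x}}

/-- `N_+`. -/
def Nplus (P : Measure Ω) (X : Ω → ℝ) : Set ℝ :=
  {x | 0 < x ∧ P {ω | X ω = x} = 0}

/-- `L_+`. -/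
def Lplus (P : Measure Ω) (X : Ω → ℝ) : Set ℝ :=
  {x | 0 < x ∧ ∃ y, 0 ≤ y ∧ y < x ∧ P {ω | X ω ∈ Set.Ioo y x} = 0}

/-- `M_-`. -/
def Mminus (P : Measure Ω) (X : Ω → ℝ) : Set ℝ :=
  {x | x < 0 ∧ ∀ y, x < y → 0 < P {ω | X ω ∈ Set.Ico x y}}

/-- `N_-`. -/
def Nminus (P : Measure Ω) (X : Ω → ℝ) : Set ℝ :=
  {x | x < 0 ∧ P {ω | X ω = x} = 0}

/-- `L_-`. -/
def Lminus (P : Measure Ω) (X : Ω → ℝ) : Set ℝ :=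
  {x | x < 0 ∧ ∃ y, x < y ∧ y ≤ 0 ∧ P {ω | X ω ∈ Set.Ioo x y} = 0}

/-- `𝒢_+`. -/
def Gplus (P : Measure Ω) (X : Ω → ℝ) : Set (ℝ × ℝ) :=
  {p | p.1 ∈ Mplus P X ∧ 0 ≤ p.2 ∧ p.2 ≤ 1 ∧
    (p.1 ∈ Nplus P X → p.2 = 1) ∧ (p.1 ∈ Lplus P X → 0 < p.2) ∧
    (P {ω | p.1 < X ω} = 0 → p.1 ∉ Nplus P X ∧ p.2 < 1)}

/-- `𝒢_-`. -/
def Gminus (P : Measure Ω) (X : Ω → ℝ) : Set (ℝ × ℝ) :=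
  {p | p.1 ∈ Mminus P X ∧ 0 ≤ p.2 ∧ p.2 ≤ 1 ∧
    (p.1 ∈ Nminus P X → p.2 = 1) ∧ (p.1 ∈ Lminus P X → 0 < p.2) ∧
    (P {ω | X ω < p.1} = 0 → p.1 ∉ Nminus P X ∧ p.2 < 1)}

/-- `𝒢 := 𝒢_+ ∪ 𝒢_-`. -/
def Gset (P : Measure Ω) (X : Ω → ℝ) : Set (ℝ × ℝ) := Gplus P X ∪ Gminus P X


open scoped Classical in
/-- `u_+(h)`. -/
def uPlus (P : Measure Ω) (X : Ω → ℝ) (h : ℝ) : ℝ :=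
  if (xPlus P X h).toReal ∈ Nplus P X then 1
  else (h - leftLim (G P X) (xPlus P X h).toReal)
      / (G P X (xPlus P X h).toReal - leftLim (G P X) (xPlus P X h).toReal)

open scoped Classical in
/-- `u_-(h)`. -/
def uMinus (P : Measure Ω) (X : Ω → ℝ) (h : ℝ) : ℝ :=
  if (xMinus P X h).toReal ∈ Nminus P X then 1
  else (h - rightLim (G P X) (xMinus P X h).toReal)
      / (G P X (xMinus P X h).toReal - rightLim (G P X) (xMinus P X h).toReal)

set_option linter.unusedSectionVars false
set_option linter.unusedVariables false
set_option maxHeartbeats 1000000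


/-- `gp μ x = ∫ t in (0,x], t dμ`. -/
def gp (μ : Measure ℝ) (x : ℝ) : ℝ := ∫ t in Set.Ioc 0 x, t ∂μ

/-- `glo μ x = ∫ t in (0,x), t dμ`. -/
def glo (μ : Measure ℝ) (x : ℝ) : ℝ := ∫ t in Set.Ioo 0 x, t ∂μ

variable {μ : Measure ℝ} [IsFiniteMeasure μ]

lemma setint_nonneg {s : Set ℝ} (hs : MeasurableSet s) (h : s ⊆ Set.Ici 0) :
    0 ≤ ∫ t in s, t ∂μ :=
  setIntegral_nonneg hs (fun t ht => h ht)

lemma setint_zero {s : Set ℝ} (h : μ s = 0) : ∫ t in s, t ∂μ = 0 := by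
  rw [Measure.restrict_eq_zero.mpr h]; simp

lemma setint_pos (hint : Integrable id μ) {s : Set ℝ} (hs : MeasurableSet s)
    (hsub : s ⊆ Set.Ioi 0) (hμ : μ s ≠ 0) : 0 < ∫ t in s, t ∂μ := by
  have hcover : s = ⋃ n : ℕ, s ∩ Set.Ici (1 / (n + 1) : ℝ) := by
    ext t
    simp only [Set.mem_iUnion, Set.mem_inter_iff, Set.mem_Ici]
    constructor
    · intro ht
      obtain ⟨n, hn⟩ := exists_nat_one_div_lt (show (0:ℝ) < t from hsub ht)
      exact ⟨n, ht, le_of_lt (by exact_mod_cast hn)⟩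
    · rintro ⟨n, ht, -⟩; exact ht
  have : ∃ n : ℕ, μ (s ∩ Set.Ici (1 / (n + 1) : ℝ)) ≠ 0 := by
    by_contra hc
    push_neg at hc
    apply hμ
    rw [hcover]
    exact measure_iUnion_null hc
  obtain ⟨n, hn⟩ := this
  set ε : ℝ := 1 / (n + 1) with hε
  have hεpos : (0:ℝ) < ε := by positivity
  have hmeas : MeasurableSet (s ∩ Set.Ici ε) := hs.inter measurableSet_Ici
  have h1 : ε * (μ (s ∩ Set.Ici ε)).toReal ≤ ∫ t in s ∩ Set.Ici ε, t ∂μ := by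
    apply setIntegral_ge_of_const_le_real hmeas (measure_ne_top _ _)
      (fun t ht => ht.2) (hint.integrableOn)
  have h2 : ∫ t in s ∩ Set.Ici ε, t ∂μ ≤ ∫ t in s, t ∂μ := by
    apply setIntegral_mono_set hint.integrableOn
    · filter_upwards [ae_restrict_mem hs] with t ht using le_of_lt (hsub ht)
    · exact HasSubset.Subset.eventuallyLE Set.inter_subset_left
  have h3 : 0 < ε * (μ (s ∩ Set.Ici ε)).toReal := by
    apply mul_pos hεpos
    exact ENNReal.toReal_pos hn (measure_ne_top _ _)
  linarith

lemma setint_eq_zero_iff (hint : Integrable id μ) {s : Set ℝ} (hs : MeasurableSet s)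
    (hsub : s ⊆ Set.Ioi 0) : ∫ t in s, t ∂μ = 0 ↔ μ s = 0 := by
  constructor
  · intro h
    by_contra hc
    exact (setint_pos hint hs hsub hc).ne' h
  · exact setint_zero

lemma gp_mono (hint : Integrable id μ) : Monotone (gp μ) := by
  intro x y hxy
  apply setIntegral_mono_set hint.integrableOn
  · filter_upwards [ae_restrict_mem measurableSet_Ioc] with t ht using le_of_lt ht.1
  · exact HasSubset.Subset.eventuallyLE (Set.Ioc_subset_Ioc_right hxy)

lemma gp_split {a b : ℝ} (hint : Integrable id μ) (ha : 0 ≤ a) (hab : a ≤ b) :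
    gp μ b = gp μ a + ∫ t in Set.Ioc a b, t ∂μ := by
  rw [gp, gp, ← setIntegral_union (f := fun t : ℝ => t) (Set.Ioc_disjoint_Ioc_of_le le_rfl) measurableSet_Ioc
      hint.integrableOn hint.integrableOn, Set.Ioc_union_Ioc_eq_Ioc ha hab]

lemma glo_split {a b : ℝ} (hint : Integrable id μ) (ha : 0 ≤ a) (hab : a < b) :
    glo μ b = gp μ a + ∫ t in Set.Ioo a b, t ∂μ := by
  rw [glo, gp, ← setIntegral_union (by
      refine Set.disjoint_left.mpr fun t ht ht' => ?_
      exact absurd ht'.1 (not_lt.mpr ht.2)) (f := fun t : ℝ => t) measurableSet_Ioo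
      hint.integrableOn hint.integrableOn, Set.Ioc_union_Ioo_eq_Ioo ha hab]

lemma gp_glo_split {b : ℝ} (hint : Integrable id μ) (hb : 0 < b) :
    gp μ b = glo μ b + b * (μ {b}).toReal := by
  have : (Set.Ioo (0:ℝ) b) ∪ {b} = Set.Ioc 0 b := Set.Ioo_union_right hb
  rw [gp, ← this, setIntegral_union (f := fun t : ℝ => t) (by simp) (measurableSet_singleton b)
      hint.integrableOn hint.integrableOn, glo]
  congr 1
  rw [integral_singleton]
  simp [mul_comm, Measure.real]

lemma glo_le_gp (hint : Integrable id μ) {x : ℝ} : glo μ x ≤ gp μ x := by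
  apply setIntegral_mono_set hint.integrableOn
  · filter_upwards [ae_restrict_mem measurableSet_Ioc] with t ht using le_of_lt ht.1
  · exact HasSubset.Subset.eventuallyLE Set.Ioo_subset_Ioc_self

lemma gp_zero : gp μ 0 = 0 := by simp [gp]

lemma gp_nonneg {x : ℝ} : 0 ≤ gp μ x :=
  setint_nonneg measurableSet_Ioc (fun t ht => le_of_lt ht.1)

/-- Left-limit of `gp` is `glo`. -/
lemma tendsto_gp_left (hint : Integrable id μ) (x : ℝ) :
    Tendsto (gp μ) (𝓝[<] x) (𝓝 (glo μ x)) := by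
  have hmono := gp_mono (μ := μ) hint
  have key : sSup (gp μ '' Set.Iio x) = glo μ x := by
    have hub : ∀ y < x, gp μ y ≤ glo μ x := by
      intro y hy
      apply setIntegral_mono_set hint.integrableOn
      · filter_upwards [ae_restrict_mem measurableSet_Ioo] with t ht using le_of_lt ht.1
      · exact HasSubset.Subset.eventuallyLE (fun t ht => ⟨ht.1, lt_of_le_of_lt ht.2 hy⟩)
    have hbdd : BddAbove (gp μ '' Set.Iio x) := by
      refine ⟨glo μ x, ?_⟩
      rintro z ⟨y, hy, rfl⟩
      exact hub y hy
    refine le_antisymm (csSup_le ⟨gp μ (x-1), x-1, (show x - 1 < x by linarith), rfl⟩ ?_) ?_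
    · rintro z ⟨y, hy, rfl⟩; exact hub y hy
    · -- glo x ≤ sSup via sequence x - 1/(n+1)
      have hseq : Tendsto (fun n : ℕ => gp μ (x - 1 / (n + 1))) atTop (𝓝 (glo μ x)) := by
        have hmonos : Monotone (fun n : ℕ => Set.Ioc (0:ℝ) (x - 1 / (n + 1))) := by
          intro a b hab
          apply Set.Ioc_subset_Ioc_right
          have : (1 : ℝ) / (b + 1) ≤ 1 / (a + 1) := by
            apply one_div_le_one_div_of_le (by positivity)
            exact_mod_cast by omega
          linarith
        have hunion : (⋃ n : ℕ, Set.Ioc (0:ℝ) (x - 1 / (n + 1))) = Set.Ioo 0 x := by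
          ext t
          simp only [Set.mem_iUnion, Set.mem_Ioc, Set.mem_Ioo]
          constructor
          · rintro ⟨n, h1, h2⟩
            have hp : (0:ℝ) < 1 / (n+1) := by positivity
            exact ⟨h1, lt_of_le_of_lt h2 (by linarith)⟩
          · rintro ⟨h1, h2⟩
            obtain ⟨n, hn⟩ := exists_nat_one_div_lt (sub_pos.mpr h2)
            exact ⟨n, h1, by linarith⟩
        have := tendsto_setIntegral_of_monotone (μ := μ) (f := fun t => t)
          (fun n : ℕ => measurableSet_Ioc) hmonos (by rw [hunion]; exact hint.integrableOn)
        rwa [hunion] at this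
      apply le_of_tendsto hseq
      filter_upwards with n
      apply le_csSup hbdd
      refine ⟨x - 1 / (n+1), ?_, rfl⟩
      simp only [Set.mem_Iio]
      have : (0:ℝ) < 1 / (n+1) := by positivity
      linarith
  rw [← key]
  exact hmono.tendsto_nhdsLT x

/-- Right continuity of `gp`. -/
lemma tendsto_gp_right (hint : Integrable id μ) (x : ℝ) :
    Tendsto (gp μ) (𝓝[>] x) (𝓝 (gp μ x)) := by
  have hmono := gp_mono (μ := μ) hint
  have key : sInf (gp μ '' Set.Ioi x) = gp μ x := by
    have hbdd : BddBelow (gp μ '' Set.Ioi x) := by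
      refine ⟨gp μ x, ?_⟩
      rintro z ⟨y, hy, rfl⟩
      exact hmono (le_of_lt hy)
    refine le_antisymm ?_ (le_csInf (by exact ⟨gp μ (x+1), x+1, by simp, rfl⟩) ?_)
    · have hseq : Tendsto (fun n : ℕ => gp μ (x + 1 / (n + 1))) atTop (𝓝 (gp μ x)) := by
        have hanti : Antitone (fun n : ℕ => Set.Ioc (0:ℝ) (x + 1 / (n + 1))) := by
          intro a b hab
          apply Set.Ioc_subset_Ioc_right
          have : (1 : ℝ) / (b + 1) ≤ 1 / (a + 1) := by
            apply one_div_le_one_div_of_le (by positivity)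
            exact_mod_cast by omega
          linarith
        have hinter : (⋂ n : ℕ, Set.Ioc (0:ℝ) (x + 1 / (n + 1))) = Set.Ioc 0 x := by
          ext t
          simp only [Set.mem_iInter, Set.mem_Ioc]
          constructor
          · intro h
            refine ⟨(h 0).1, ?_⟩
            by_contra hc
            push_neg at hc
            obtain ⟨n, hn⟩ := exists_nat_one_div_lt (sub_pos.mpr hc)
            exact absurd ((h n).2) (by push_neg; linarith)
          · rintro ⟨h1, h2⟩ n
            have hp : (0:ℝ) < 1/(n+1) := by positivity
            exact ⟨h1, by linarith⟩
        have := tendsto_setIntegral_of_antitone (μ := μ) (f := fun t => t)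
          (fun n : ℕ => measurableSet_Ioc) hanti ⟨0, hint.integrableOn⟩
        rwa [hinter] at this
      apply ge_of_tendsto hseq
      filter_upwards with n
      apply csInf_le hbdd
      refine ⟨x + 1 / (n+1), ?_, rfl⟩
      simp only [Set.mem_Ioi]
      have : (0:ℝ) < 1 / (n+1) := by positivity
      linarith
    · rintro z ⟨y, hy, rfl⟩
      exact hmono (le_of_lt hy)
  rw [← key]
  exact hmono.tendsto_nhdsGT x

/-- `gp` tends to `∫ t in Ioi 0, t dμ` along `ℕ`. -/
lemma tendsto_gp_nat (hint : Integrable id μ) :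
    Tendsto (fun n : ℕ => gp μ n) atTop (𝓝 (∫ t in Set.Ioi 0, t ∂μ)) := by
  have hmonos : Monotone (fun n : ℕ => Set.Ioc (0:ℝ) n) := by
    intro a b hab
    exact Set.Ioc_subset_Ioc_right (by exact_mod_cast hab)
  have hunion : (⋃ n : ℕ, Set.Ioc (0:ℝ) n) = Set.Ioi 0 := by
    ext t
    simp only [Set.mem_iUnion, Set.mem_Ioc, Set.mem_Ioi]
    constructor
    · rintro ⟨n, h1, -⟩; exact h1
    · intro h
      obtain ⟨n, hn⟩ := exists_nat_gt t
      exact ⟨n, h, le_of_lt hn⟩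
  have := tendsto_setIntegral_of_monotone (μ := μ) (f := fun t => t)
    (fun n : ℕ => measurableSet_Ioc) hmonos (by rw [hunion]; exact hint.integrableOn)
  rwa [hunion] at this

/-- `gp x ≤ ∫ Ioi 0` with difference `∫ Ioi x`. -/
lemma gp_split_top {x : ℝ} (hint : Integrable id μ) (hx : 0 ≤ x) :
    (∫ t in Set.Ioi 0, t ∂μ) = gp μ x + ∫ t in Set.Ioi x, t ∂μ := by
  rw [gp, ← setIntegral_union (by
      refine Set.disjoint_left.mpr fun t ht ht' => ?_
      exact absurd ht' (not_lt.mpr ht.2)) (f := fun t : ℝ => t) measurableSet_Ioi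
      hint.integrableOn hint.integrableOn, Set.Ioc_union_Ioi_eq_Ioi hx]

/-- With mean zero, `∫ t in Ioi 0, t dμ = (1/2) ∫ |t| dμ`. -/
lemma int_Ioi_eq_half (hint : Integrable id μ) (hmean : ∫ t, t ∂μ = 0) :
    ∫ t in Set.Ioi 0, t ∂μ = (1/2) * ∫ t, |t| ∂μ := by
  have habs : Integrable (fun t : ℝ => |t|) μ := hint.abs
  have hsplit : ∀ (f : ℝ → ℝ), Integrable f μ →
      ∫ t, f t ∂μ = (∫ t in Set.Iio 0, f t ∂μ) + (∫ t in Set.Ici 0, f t ∂μ) := by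
    intro f hf
    rw [← setIntegral_union (Set.Iio_disjoint_Ici le_rfl) measurableSet_Ici
      hf.integrableOn hf.integrableOn, Set.Iio_union_Ici, setIntegral_univ]
  have hIci : ∀ (f : ℝ → ℝ), Integrable f μ → f 0 = 0 →
      ∫ t in Set.Ici 0, f t ∂μ = ∫ t in Set.Ioi 0, f t ∂μ := by
    intro f hf hf0
    have : Set.Ici (0:ℝ) = {0} ∪ Set.Ioi 0 := by
      ext t; simp only [Set.mem_Ici, Set.mem_union, Set.mem_singleton_iff, Set.mem_Ioi]
      constructor
      · intro h; rcases eq_or_lt_of_le h with h | h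
        · exact Or.inl h.symm
        · exact Or.inr h
      · rintro (rfl | h); exacts [le_rfl, le_of_lt h]
    rw [this, setIntegral_union (by simp) measurableSet_Ioi hf.integrableOn hf.integrableOn,
      integral_singleton, hf0]
    simp
  have h1 : ∫ t, t ∂μ = (∫ t in Set.Iio 0, t ∂μ) + ∫ t in Set.Ioi 0, t ∂μ := by
    rw [hsplit (fun t => t) hint, hIci (fun t => t) hint rfl]
  have h2 : ∫ t, |t| ∂μ = (∫ t in Set.Iio 0, |t| ∂μ) + ∫ t in Set.Ioi 0, |t| ∂μ := by
    rw [hsplit (fun t => |t|) habs, hIci (fun t => |t|) habs (abs_zero)]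
  have h3 : ∫ t in Set.Iio 0, |t| ∂μ = - ∫ t in Set.Iio 0, t ∂μ := by
    rw [← integral_neg]
    apply setIntegral_congr_fun measurableSet_Iio
    intro t ht
    exact abs_of_neg ht
  have h4 : ∫ t in Set.Ioi 0, |t| ∂μ = ∫ t in Set.Ioi 0, t ∂μ := by
    apply setIntegral_congr_fun measurableSet_Ioi
    intro t ht
    exact abs_of_pos ht
  rw [hmean] at h1
  rw [h2, h3, h4]
  linarith


section Trans

variable (P : Measure Ω) [IsProbabilityMeasure P] (X : Ω → ℝ)

lemma integrable_id_map (hXm : Measurable X) (hXint : Integrable X P) :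
    Integrable id (P.map X) :=
  (integrable_map_measure aestronglyMeasurable_id hXm.aemeasurable).mpr hXint

lemma map_meas (hXm : Measurable X) {s : Set ℝ} (hs : MeasurableSet s) :
    P {ω | X ω ∈ s} = P.map X s := by
  rw [Measure.map_apply hXm hs]; rfl

lemma G_eq_gp (hXm : Measurable X) {x : ℝ} (hx : 0 ≤ x) :
    G P X x = gp (P.map X) x := by
  rw [G, if_pos hx, gp, ← integral_indicator measurableSet_Ioc,
    integral_map hXm.aemeasurable (by
      apply Measurable.aestronglyMeasurable
      exact (measurable_id.indicator measurableSet_Ioc))]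
  congr 1
  ext ω
  simp [Set.indicator_apply]

lemma map_mean (hXm : Measurable X) : ∫ t, t ∂(P.map X) = ∫ ω, X ω ∂P :=
  integral_map hXm.aemeasurable aestronglyMeasurable_id

lemma mHalf_eq_int (hXm : Measurable X) (hXint : Integrable X P) (hXmean : ∫ ω, X ω ∂P = 0) :
    mHalf P X = ∫ t in Set.Ioi 0, t ∂(P.map X) := by
  rw [int_Ioi_eq_half (integrable_id_map P X hXm hXint) (by rw [map_mean P X hXm, hXmean]),
    mHalf]
  congr 1
  exact (integral_map hXm.aemeasurable (by
    exact (measurable_abs.aestronglyMeasurable))).symm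

lemma tendsto_G_left (hXm : Measurable X) (hXint : Integrable X P) {x : ℝ} (hx : 0 < x) :
    Tendsto (G P X) (𝓝[<] x) (𝓝 (glo (P.map X) x)) := by
  apply (tendsto_gp_left (integrable_id_map P X hXm hXint) x).congr'
  filter_upwards [Ioo_mem_nhdsLT_of_mem (show x ∈ Set.Ioc 0 x from ⟨hx, le_rfl⟩)] with y hy
  exact (G_eq_gp P X hXm hy.1.le).symm

lemma leftLim_G (hXm : Measurable X) (hXint : Integrable X P) {x : ℝ} (hx : 0 < x) :
    leftLim (G P X) x = glo (P.map X) x :=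
  leftLim_eq_of_tendsto (tendsto_G_left P X hXm hXint hx)

/-- Characterization of `xPlus` as a real coercion. -/
lemma xPlus_eq_coe (hXm : Measurable X) {h x₀ : ℝ} (hx₀ : 0 ≤ x₀)
    (hmem : h ≤ gp (P.map X) x₀)
    (hlb : ∀ r : ℝ, 0 ≤ r → h ≤ gp (P.map X) r → x₀ ≤ r) :
    xPlus P X h = (x₀ : EReal) := by
  apply le_antisymm
  · apply sInf_le
    refine ⟨by exact_mod_cast hx₀, ?_⟩
    rw [Gbar, if_neg (by simp), EReal.toReal_coe, G_eq_gp P X hXm hx₀]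
    exact hmem
  · apply le_sInf
    rintro z ⟨hz0, hzG⟩
    induction z using EReal.rec with
    | bot => exact absurd hz0 (by simp)
    | top => exact le_top
    | coe r =>
      have hr0 : (0:ℝ) ≤ r := by exact_mod_cast hz0
      rw [Gbar, if_neg (by simp), EReal.toReal_coe, G_eq_gp P X hXm hr0] at hzG
      exact_mod_cast hlb r hr0 hzG

end Trans

-- DEV: appended to main.lean before the theorem
section Dev1
variable {Ω : Type*} [MeasurableSpace Ω]

lemma exists_x0 {μ : Measure ℝ} [IsProbabilityMeasure μ] (hint : Integrable id μ)
    {h : ℝ} (h0 : 0 < h) (hhm : h < ∫ t in Set.Ioi 0, t ∂μ) :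
    ∃ x₀ : ℝ, 0 < x₀ ∧ h ≤ gp μ x₀ ∧ (∀ r : ℝ, 0 ≤ r → h ≤ gp μ r → x₀ ≤ r) := by
  set Sr := {x : ℝ | 0 ≤ x ∧ h ≤ gp μ x} with hSr
  have hne : Sr.Nonempty := by
    obtain ⟨n, hn⟩ := ((tendsto_gp_nat hint).eventually_const_lt hhm).exists
    exact ⟨n, Nat.cast_nonneg n, hn.le⟩
  have hbdd : BddBelow Sr := ⟨0, fun z hz => hz.1⟩
  refine ⟨sInf Sr, ?_, ?_, fun r h1 h2 => csInf_le hbdd ⟨h1, h2⟩⟩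
  · obtain ⟨δ, hδh, hδ0⟩ :=
      (((by simpa [gp_zero] using tendsto_gp_right hint 0 :
          Tendsto (gp μ) (𝓝[>] 0) (𝓝 0)).eventually_lt_const h0).and
        self_mem_nhdsWithin).exists
    have hδle : δ ≤ sInf Sr := le_csInf hne (fun z hz => by
      by_contra hc; push_neg at hc
      exact absurd (le_trans hz.2 (gp_mono hint hc.le)) (not_le.mpr hδh))
    exact lt_of_lt_of_le hδ0 hδle
  · apply ge_of_tendsto (tendsto_gp_right hint (sInf Sr))
    filter_upwards [self_mem_nhdsWithin] with y hy
    obtain ⟨z, hz, hzy⟩ := exists_lt_of_csInf_lt hne hy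
    exact le_trans hz.2 (gp_mono hint hzy.le)

variable (P : Measure Ω) [IsProbabilityMeasure P] (X : Ω → ℝ)

lemma forward_bundle (hXm : Measurable X) (hXint : Integrable X P)
    (hXmean : ∫ ω, X ω ∂P = 0) {h : ℝ} (hh : h ∈ Set.Ioo 0 (mHalf P X)) :
    ∃ x₀ : ℝ, xPlus P X h = (x₀ : EReal) ∧ 0 < x₀ ∧ h ≤ gp (P.map X) x₀ ∧
      glo (P.map X) x₀ ≤ h ∧ (∀ y, 0 ≤ y → y < x₀ → gp (P.map X) y < h) := by
  have hid := integrable_id_map P X hXm hXint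
  haveI : IsProbabilityMeasure (P.map X) := Measure.isProbabilityMeasure_map hXm.aemeasurable
  have hm := mHalf_eq_int P X hXm hXint hXmean
  obtain ⟨x₀, hx0, hmem, hlb⟩ := exists_x0 hid hh.1 (hm ▸ hh.2)
  have hnotin : ∀ y, 0 ≤ y → y < x₀ → gp (P.map X) y < h := by
    intro y h1 h2
    by_contra hc; push_neg at hc
    exact absurd (hlb y h1 hc) (not_le.mpr h2)
  refine ⟨x₀, xPlus_eq_coe P X hXm hx0.le hmem hlb, hx0, hmem, ?_, hnotin⟩
  apply le_of_tendsto (tendsto_gp_left hid x₀)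
  filter_upwards [Ioo_mem_nhdsLT_of_mem (show x₀ ∈ Set.Ioc 0 x₀ from ⟨hx0, le_rfl⟩)] with y hy
  exact (hnotin y hy.1.le hy.2).le

end Dev1


section Dev2
variable {Ω : Type*} [MeasurableSpace Ω]
variable (P : Measure Ω) [IsProbabilityMeasure P] (X : Ω → ℝ)

lemma mem_Nplus_iff (hXm : Measurable X) {x : ℝ} (hx : 0 < x) :
    x ∈ Nplus P X ↔ P.map X {x} = 0 := by
  simp only [Nplus, Set.mem_setOf_eq, hx, true_and]
  rw [show {ω | X ω = x} = {ω | X ω ∈ ({x} : Set ℝ)} by simp,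
    map_meas P X hXm (measurableSet_singleton _)]

lemma plus_forward (hXm : Measurable X) (hXint : Integrable X P)
    (hXmean : ∫ ω, X ω ∂P = 0) {h : ℝ} (hh : h ∈ Set.Ioo 0 (mHalf P X)) :
    ((xPlus P X h).toReal, uPlus P X h) ∈ Gplus P X ∧
      hPlus P X (xPlus P X h).toReal (uPlus P X h) = h := by
  obtain ⟨x₀, hxp, hx0, hmem, hglo, hnotin⟩ := forward_bundle P X hXm hXint hXmean hh
  set μ := P.map X with hμdef
  haveI : IsProbabilityMeasure μ := Measure.isProbabilityMeasure_map hXm.aemeasurable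
  have hid : Integrable id μ := integrable_id_map P X hXm hXint
  have hm := mHalf_eq_int P X hXm hXint hXmean
  have hxpr : (xPlus P X h).toReal = x₀ := by rw [hxp]; exact EReal.toReal_coe x₀
  have hLL : leftLim (G P X) x₀ = glo μ x₀ := leftLim_G P X hXm hXint hx0
  have hGx : G P X x₀ = gp μ x₀ := G_eq_gp P X hXm hx0.le
  have hNiff := mem_Nplus_iff P X hXm hx0
  have hsplit : gp μ x₀ = glo μ x₀ + x₀ * (μ {x₀}).toReal := gp_glo_split hid hx0
  -- M_+ membership
  have hMmem : x₀ ∈ Mplus P X := by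
    refine ⟨hx0, fun y hy => ?_⟩
    have hsub : {ω | X ω ∈ Set.Ioc (max y 0) x₀} ⊆ {ω | X ω ∈ Set.Ioc y x₀} :=
      fun ω hω => ⟨lt_of_le_of_lt (le_max_left y 0) hω.1, hω.2⟩
    have hpos : 0 < P {ω | X ω ∈ Set.Ioc (max y 0) x₀} := by
      rw [map_meas P X hXm measurableSet_Ioc]
      rw [pos_iff_ne_zero]
      intro hc
      have h1 : gp μ x₀ = gp μ (max y 0) := by
        rw [gp_split hid (le_max_right y 0) (max_lt hy hx0).le, setint_zero hc, add_zero]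
      exact absurd (h1 ▸ hmem) (not_le.mpr (hnotin _ (le_max_right y 0) (max_lt hy hx0)))
    exact lt_of_lt_of_le hpos (measure_mono hsub)
  -- gp x₀ = m when no mass above
  have htop : P {ω | x₀ < X ω} = 0 → gp μ x₀ = mHalf P X := by
    intro hc
    rw [show {ω | x₀ < X ω} = {ω | X ω ∈ Set.Ioi x₀} from rfl,
      map_meas P X hXm measurableSet_Ioi] at hc
    rw [hm, gp_split_top hid hx0.le, setint_zero hc, add_zero]
  by_cases hN : x₀ ∈ Nplus P X
  · -- null singleton case
    have hu : uPlus P X h = 1 := by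
      rw [uPlus, if_pos (by rwa [hxpr])]
    have hμ0 : μ {x₀} = 0 := hNiff.mp hN
    have heq : gp μ x₀ = glo μ x₀ := by rw [hsplit, hμ0]; simp
    have hhh : h = gp μ x₀ := le_antisymm hmem (heq ▸ hglo)
    constructor
    · rw [Gplus]
      simp only [Set.mem_setOf_eq, hxpr, hu]
      refine ⟨hMmem, by norm_num, by norm_num, fun _ => trivial, fun _ => by norm_num,
        fun hc => ?_⟩
      exact absurd (hhh.trans (htop hc)) (ne_of_lt hh.2)
    · rw [hxpr, hu, hPlus, hLL, hGx, ← hhh]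
      ring
  · -- atom case
    have hμ0 : μ {x₀} ≠ 0 := fun hc => hN (hNiff.mpr hc)
    have hdpos : 0 < x₀ * (μ {x₀}).toReal :=
      mul_pos hx0 (ENNReal.toReal_pos hμ0 (measure_ne_top _ _))
    have hepos : 0 < gp μ x₀ - glo μ x₀ := by rw [hsplit]; linarith
    have hu : uPlus P X h = (h - glo μ x₀) / (gp μ x₀ - glo μ x₀) := by
      rw [uPlus, if_neg (by rwa [hxpr]), hxpr, hLL, hGx]
    constructor
    · rw [Gplus]
      simp only [Set.mem_setOf_eq, hxpr, hu]
      refine ⟨hMmem, div_nonneg (by linarith) hepos.le,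
        by rw [div_le_one hepos]; linarith, fun hc => absurd hc hN, ?_, fun hc => ?_⟩
      · -- L_+ implies u > 0
        rintro ⟨-, y, hy0, hyx, hPz⟩
        rw [map_meas P X hXm measurableSet_Ioo] at hPz
        have hglo_eq : glo μ x₀ = gp μ y := by
          rw [glo_split hid hy0 hyx, setint_zero hPz, add_zero]
        have : glo μ x₀ < h := hglo_eq ▸ hnotin y hy0 hyx
        exact div_pos (by linarith) hepos
      · refine ⟨hN, ?_⟩
        have h1 : h < gp μ x₀ := by rw [htop hc]; exact hh.2
        rw [div_lt_one hepos]
        linarith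
    · rw [hxpr, hu, hPlus, hLL, hGx]
      field_simp
      ring

end Dev2

section Dev3
variable {Ω : Type*} [MeasurableSpace Ω]
variable (P : Measure Ω) [IsProbabilityMeasure P] (X : Ω → ℝ)

lemma plus_surj (hXm : Measurable X) (hXint : Integrable X P)
    (hXmean : ∫ ω, X ω ∂P = 0) {p : ℝ × ℝ} (hp : p ∈ Gplus P X) :
    hPlus P X p.1 p.2 ∈ Set.Ioo (0:ℝ) (mHalf P X) ∧
      ((xPlus P X (hPlus P X p.1 p.2)).toReal,
        uPlus P X (hPlus P X p.1 p.2)) = p := by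
  obtain ⟨x, u⟩ := p
  obtain ⟨hM, hu0, hu1, hNimp, hLimp, hTimp⟩ := hp
  simp only at hM hu0 hu1 hNimp hLimp hTimp ⊢
  have hx0 : 0 < x := hM.1
  set μ := P.map X with hμdef
  haveI : IsProbabilityMeasure μ := Measure.isProbabilityMeasure_map hXm.aemeasurable
  have hid : Integrable id μ := integrable_id_map P X hXm hXint
  have hm := mHalf_eq_int P X hXm hXint hXmean
  have hLL : leftLim (G P X) x = glo μ x := leftLim_G P X hXm hXint hx0
  have hGx : G P X x = gp μ x := G_eq_gp P X hXm hx0.le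
  have hNiff := mem_Nplus_iff P X hXm hx0
  have hsplit : gp μ x = glo μ x + x * (μ {x}).toReal := gp_glo_split hid hx0
  have hglo0 : 0 ≤ glo μ x := setint_nonneg measurableSet_Ioo (fun t ht => ht.1.le)
  have hd0 : 0 ≤ gp μ x - glo μ x := by
    have : 0 ≤ x * (μ {x}).toReal := mul_nonneg hx0.le ENNReal.toReal_nonneg
    linarith
  set e := gp μ x - glo μ x with hedef
  have hh_def : hPlus P X x u = glo μ x + u * e := by rw [hPlus, hLL, hGx]
  set h := hPlus P X x u with hhdef
  have hglo_le : glo μ x ≤ h := by rw [hh_def]; nlinarith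
  have hle_gp : h ≤ gp μ x := by rw [hh_def]; nlinarith
  -- Lplus from a null open gap
  have hLof : ∀ y : ℝ, 0 ≤ y → y < x → μ (Set.Ioo y x) = 0 → x ∈ Lplus P X := by
    intro y h1 h2 h3
    exact ⟨hx0, y, h1, h2, by rwa [map_meas P X hXm measurableSet_Ioo]⟩
  -- positivity of gp x
  have hgp_pos : 0 < gp μ x := by
    have := hM.2 0 hx0
    rw [map_meas P X hXm measurableSet_Ioc] at this
    exact setint_pos hid measurableSet_Ioc (fun t ht => ht.1) this.ne'
  -- h > 0
  have hpos : 0 < h := by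
    rcases eq_or_lt_of_le hglo0 with hg0 | hg0
    · have hIoo : μ (Set.Ioo 0 x) = 0 :=
        (setint_eq_zero_iff hid measurableSet_Ioo (fun t ht => ht.1)).mp hg0.symm
      have hu_pos : 0 < u := hLimp (hLof 0 le_rfl hx0 hIoo)
      have he_pos : 0 < e := by rw [hedef, ← hg0]; simpa [← hg0] using hgp_pos
      rw [hh_def, ← hg0]
      positivity
    · linarith
  -- h < m
  have hgp_le_m : gp μ x ≤ mHalf P X := by
    rw [hm, gp_split_top hid hx0.le]
    have : 0 ≤ ∫ t in Set.Ioi x, t ∂μ :=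
      setint_nonneg measurableSet_Ioi (fun t ht => (hx0.trans ht).le)
    linarith
  have hlt : h < mHalf P X := by
    rcases eq_or_lt_of_le hgp_le_m with hgm | hgm
    · -- gp x = m : no mass above x
      have hIoi : μ (Set.Ioi x) = 0 := by
        have h1 : (∫ t in Set.Ioi x, t ∂μ) = 0 := by
          have := gp_split_top hid (μ := μ) hx0.le
          rw [← hm] at this
          linarith [hgm]
        exact (setint_eq_zero_iff hid measurableSet_Ioi
          (fun t ht => hx0.trans ht)).mp h1
      have hT := hTimp (by rwa [show {ω | x < X ω} = {ω | X ω ∈ Set.Ioi x} from rfl,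
        map_meas P X hXm measurableSet_Ioi])
      have hμx : μ {x} ≠ 0 := fun hc => hT.1 (hNiff.mpr hc)
      have he_pos : 0 < e := by
        rw [hedef, hsplit]
        have := ENNReal.toReal_pos hμx (measure_ne_top _ _)
        have : 0 < x * (μ {x}).toReal := mul_pos hx0 this
        linarith
      have : h < gp μ x := by rw [hh_def]; nlinarith [hT.2]
      linarith
    · linarith
  -- xPlus h = x
  have hxPlus : xPlus P X h = (x : EReal) := by
    apply xPlus_eq_coe P X hXm hx0.le hle_gp
    intro r hr0 hrh
    by_contra hc; push_neg at hc
    have hIoc_pos : 0 < ∫ t in Set.Ioc r x, t ∂μ := by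
      have := hM.2 r hc
      rw [map_meas P X hXm measurableSet_Ioc] at this
      exact setint_pos hid measurableSet_Ioc (fun t ht => lt_of_le_of_lt hr0 ht.1) this.ne'
    have hgp_lt : gp μ r < gp μ x := by
      rw [gp_split hid hr0 hc.le]; linarith
    have hgp_le_glo : gp μ r ≤ glo μ x := by
      apply setIntegral_mono_set hid.integrableOn
      · filter_upwards [ae_restrict_mem measurableSet_Ioo] with t ht using ht.1.le
      · exact HasSubset.Subset.eventuallyLE (fun t ht => ⟨ht.1, lt_of_le_of_lt ht.2 hc⟩)
    -- all equal
    have he1 : gp μ r = glo μ x := le_antisymm hgp_le_glo (by linarith)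
    have he2 : h = glo μ x := by linarith
    have hIoo : μ (Set.Ioo r x) = 0 := by
      have : (∫ t in Set.Ioo r x, t ∂μ) = 0 := by
        have := glo_split hid hr0 hc (μ := μ)
        linarith
      exact (setint_eq_zero_iff hid measurableSet_Ioo
        (fun t ht => lt_of_le_of_lt hr0 ht.1)).mp this
    have hu_pos : 0 < u := hLimp (hLof r hr0 hc hIoo)
    have hue : u * e = 0 := by rw [hh_def] at he2; linarith
    have he0 : e = 0 := by
      rcases mul_eq_zero.mp hue with h' | h'
      · exact absurd h' hu_pos.ne'
      · exact h'
    rw [hedef] at he0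
    linarith
  have hxpr : (xPlus P X h).toReal = x := by rw [hxPlus]; exact EReal.toReal_coe x
  refine ⟨⟨hpos, hlt⟩, ?_⟩
  rw [hxpr]
  by_cases hN : x ∈ Nplus P X
  · rw [uPlus, if_pos (by rwa [hxpr]), hNimp hN]
  · have hμx : μ {x} ≠ 0 := fun hc => hN (hNiff.mpr hc)
    have he_pos : 0 < e := by
      rw [hedef, hsplit]
      have := mul_pos hx0 (ENNReal.toReal_pos hμx (measure_ne_top _ _))
      linarith
    rw [uPlus, if_neg (by rwa [hxpr]), hxpr, hLL, hGx]
    have : h - glo μ x = u * e := by rw [hh_def]; ring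
    rw [show G P X x = gp μ x from hGx] at *
    congr 1
    rw [this, ← hedef]
    field_simp
end Dev3


section Dev4
variable {Ω : Type*} [MeasurableSpace Ω]
variable (P : Measure Ω) [IsProbabilityMeasure P] (X : Ω → ℝ)

lemma G_neg (x : ℝ) : G P (fun ω => -X ω) x = G P X (-x) := by
  rcases lt_trichotomy x 0 with hx | hx | hx
  · rw [G, if_neg (not_le.mpr hx), G, if_pos (by linarith)]
    congr 1; ext ω
    have hiff : (-X ω ∈ Set.Ico x 0) ↔ (X ω ∈ Set.Ioc 0 (-x)) := by
      simp only [Set.mem_Ico, Set.mem_Ioc]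
      constructor
      · rintro ⟨h1, h2⟩; exact ⟨by linarith, by linarith⟩
      · rintro ⟨h1, h2⟩; exact ⟨by linarith, by linarith⟩
    rw [if_congr hiff (neg_neg _) rfl]
  · subst hx
    rw [G, if_pos le_rfl, neg_zero, G, if_pos le_rfl]
    congr 1; ext ω
    simp [Set.Ioc_self]
  · rw [G, if_pos hx.le, G, if_neg (by intro hc; linarith)]
    congr 1; ext ω
    have hiff : (-X ω ∈ Set.Ioc 0 x) ↔ (X ω ∈ Set.Ico (-x) 0) := by
      simp only [Set.mem_Ico, Set.mem_Ioc]
      constructor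
      · rintro ⟨h1, h2⟩; exact ⟨by linarith, by linarith⟩
      · rintro ⟨h1, h2⟩; exact ⟨by linarith, by linarith⟩
    rw [if_congr hiff rfl rfl]

lemma mHalf_neg : mHalf P (fun ω => -X ω) = mHalf P X := by
  simp [mHalf, abs_neg]

lemma Gbar_neg (x : EReal) : Gbar P (fun ω => -X ω) x = Gbar P X (-x) := by
  induction x using EReal.rec with
  | bot => rw [Gbar, if_pos (Or.inr rfl), Gbar, if_pos (by simp), mHalf_neg]
  | top => rw [Gbar, if_pos (Or.inl rfl), Gbar, if_pos (by simp), mHalf_neg]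
  | coe r =>
    rw [Gbar, if_neg (by simp), Gbar, ← EReal.coe_neg, if_neg (by simp),
      EReal.toReal_coe, EReal.toReal_coe, G_neg]

lemma xMinus_neg (h : ℝ) : xMinus P X h = -(xPlus P (fun ω => -X ω) h) := by
  have hmemiff : ∀ x : EReal,
      (0 ≤ x ∧ h ≤ Gbar P (fun ω => -X ω) x) ↔ ((-x) ≤ 0 ∧ h ≤ Gbar P X (-x)) := by
    intro x
    rw [Gbar_neg]
    constructor
    · rintro ⟨h1, h2⟩
      exact ⟨by rw [← neg_zero]; exact EReal.neg_le_neg_iff.mpr h1, h2⟩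
    · rintro ⟨h1, h2⟩
      refine ⟨?_, h2⟩
      have := EReal.neg_le_neg_iff.mpr h1
      rwa [neg_neg, neg_zero] at this
  rw [xMinus, xPlus]
  apply le_antisymm
  · apply sSup_le
    rintro z ⟨hz1, hz2⟩
    have hmem : -z ∈ {x : EReal | 0 ≤ x ∧ h ≤ Gbar P (fun ω => -X ω) x} := by
      rw [Set.mem_setOf_eq, hmemiff (-z)]
      rw [neg_neg]
      exact ⟨hz1, hz2⟩
    have := sInf_le hmem
    rw [← neg_neg z]
    exact EReal.neg_le_neg_iff.mpr this
  · rw [EReal.neg_le]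
    apply le_sInf
    rintro w ⟨hw1, hw2⟩
    rw [EReal.neg_le]
    apply le_sSup
    rw [Set.mem_setOf_eq]
    exact (hmemiff w).mp ⟨hw1, hw2⟩

lemma tendsto_neg_within (x : ℝ) :
    Tendsto (fun y : ℝ => -y) (𝓝[>] x) (𝓝[<] (-x)) := by
  apply tendsto_nhdsWithin_of_tendsto_nhds_of_eventually_within
  · exact (continuous_neg.tendsto x).mono_left nhdsWithin_le_nhds
  · filter_upwards [self_mem_nhdsWithin] with y hy
    exact neg_lt_neg (show x < y from hy)

lemma rightLim_G_neg (hXm : Measurable X) (hXint : Integrable X P) {x : ℝ} (hx : x < 0) :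
    rightLim (G P X) x = leftLim (G P (fun ω => -X ω)) (-x) := by
  have hXm' : Measurable (fun ω => -X ω) := hXm.neg
  have hXint' : Integrable (fun ω => -X ω) P := hXint.neg
  rw [leftLim_G P _ hXm' hXint' (neg_pos.mpr hx)]
  apply rightLim_eq_of_tendsto
  have h1 := (tendsto_G_left P _ hXm' hXint' (neg_pos.mpr hx)).comp (tendsto_neg_within x)
  apply h1.congr
  intro y
  simp only [Function.comp_apply]
  rw [G_neg, neg_neg]

lemma hMinus_neg (hXm : Measurable X) (hXint : Integrable X P) {x : ℝ} (hx : x < 0) (u : ℝ) :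
    hMinus P X x u = hPlus P (fun ω => -X ω) (-x) u := by
  rw [hMinus, hPlus, rightLim_G_neg P X hXm hXint hx, G_neg, neg_neg]

lemma mem_Nminus_iff_neg {x : ℝ} :
    x ∈ Nminus P X ↔ -x ∈ Nplus P (fun ω => -X ω) := by
  simp only [Nminus, Nplus, Set.mem_setOf_eq, neg_pos]
  have : {ω | -X ω = -x} = {ω | X ω = x} := by ext ω; simp
  rw [this]

lemma mem_Gminus_iff (p : ℝ × ℝ) :
    p ∈ Gminus P X ↔ (-p.1, p.2) ∈ Gplus P (fun ω => -X ω) := by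
  obtain ⟨x, u⟩ := p
  simp only [Gminus, Gplus, Set.mem_setOf_eq]
  have hM : x ∈ Mminus P X ↔ -x ∈ Mplus P (fun ω => -X ω) := by
    simp only [Mminus, Mplus, Set.mem_setOf_eq, neg_pos]
    constructor
    · rintro ⟨h1, h2⟩
      refine ⟨h1, fun y hy => ?_⟩
      have := h2 (-y) (by linarith)
      convert this using 2
      ext ω; simp only [Set.mem_setOf_eq, Set.mem_Ioc, Set.mem_Ico]
      constructor
      · rintro ⟨a, b⟩; constructor <;> linarith
      · rintro ⟨a, b⟩; constructor <;> linarith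
    · rintro ⟨h1, h2⟩
      refine ⟨h1, fun y hy => ?_⟩
      have := h2 (-y) (by linarith)
      convert this using 2
      ext ω; simp only [Set.mem_setOf_eq, Set.mem_Ioc, Set.mem_Ico]
      constructor
      · rintro ⟨a, b⟩; constructor <;> linarith
      · rintro ⟨a, b⟩; constructor <;> linarith
  have hN := mem_Nminus_iff_neg P X (x := x)
  have hL : x ∈ Lminus P X ↔ -x ∈ Lplus P (fun ω => -X ω) := by
    simp only [Lminus, Lplus, Set.mem_setOf_eq, neg_pos]
    constructor
    · rintro ⟨h1, y, hy1, hy2, hy3⟩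
      refine ⟨h1, -y, by linarith, by linarith, ?_⟩
      convert hy3 using 2
      ext ω; simp only [Set.mem_setOf_eq, Set.mem_Ioo]
      constructor
      · rintro ⟨a, b⟩; constructor <;> linarith
      · rintro ⟨a, b⟩; constructor <;> linarith
    · rintro ⟨h1, y, hy1, hy2, hy3⟩
      refine ⟨h1, -y, by linarith, by linarith, ?_⟩
      convert hy3 using 2
      ext ω; simp only [Set.mem_setOf_eq, Set.mem_Ioo]
      constructor
      · rintro ⟨a, b⟩; constructor <;> linarith
      · rintro ⟨a, b⟩; constructor <;> linarith
  have hT : P {ω | X ω < x} = P {ω | -x < -X ω} := by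
    congr 1; ext ω; simp only [Set.mem_setOf_eq, neg_lt_neg_iff]
  rw [hM, hN, hL, hT]

end Dev4


section Dev5
variable {Ω : Type*} [MeasurableSpace Ω]
variable (P : Measure Ω) [IsProbabilityMeasure P] (X : Ω → ℝ)

lemma uMinus_neg (hXm : Measurable X) (hXint : Integrable X P) {h : ℝ}
    (hx : 0 < (xPlus P (fun ω => -X ω) h).toReal) :
    uMinus P X h = uPlus P (fun ω => -X ω) h := by
  have htr : (xMinus P X h).toReal = -(xPlus P (fun ω => -X ω) h).toReal := by
    rw [xMinus_neg, EReal.toReal_neg_eq]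
  have hNiff : (xMinus P X h).toReal ∈ Nminus P X ↔
      (xPlus P (fun ω => -X ω) h).toReal ∈ Nplus P (fun ω => -X ω) := by
    rw [mem_Nminus_iff_neg, htr, neg_neg]
  by_cases hN : (xMinus P X h).toReal ∈ Nminus P X
  · rw [uMinus, if_pos hN, uPlus, if_pos (hNiff.mp hN)]
  · rw [uMinus, if_neg hN, uPlus, if_neg (fun hc => hN (hNiff.mpr hc)), htr,
      rightLim_G_neg P X hXm hXint (by linarith), G_neg, neg_neg]
end Dev5


/-- Lemma `bijection` of the paper: `h ↦ (x_+(h), u_+(h))` is a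
one-to-one map of `(0,m)` onto `𝒢_+` with inverse `(x,u) ↦ h_+(x,u)`, and similarly
`h ↦ (x_-(h), u_-(h))` is a one-to-one map of `(0,m)` onto `𝒢_-` with inverse `h_-`. -/
theorem bijection_G
    (P : Measure Ω) [IsProbabilityMeasure P] (X : Ω → ℝ)
    (hXm : Measurable X) (hXint : Integrable X P)
    (hXmean : ∫ ω, X ω ∂P = 0) (hX0 : P {ω | X ω = 0} ≠ 1) :
    ((∀ h ∈ Set.Ioo (0:ℝ) (mHalf P X),
        ((xPlus P X h).toReal, uPlus P X h) ∈ Gplus P X) ∧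
      Set.InjOn (fun h => ((xPlus P X h).toReal, uPlus P X h))
        (Set.Ioo (0:ℝ) (mHalf P X)) ∧
      (∀ p ∈ Gplus P X, hPlus P X p.1 p.2 ∈ Set.Ioo (0:ℝ) (mHalf P X) ∧
        ((xPlus P X (hPlus P X p.1 p.2)).toReal,
          uPlus P X (hPlus P X p.1 p.2)) = p) ∧
      (∀ h ∈ Set.Ioo (0:ℝ) (mHalf P X),
        hPlus P X (xPlus P X h).toReal (uPlus P X h) = h)) ∧
    ((∀ h ∈ Set.Ioo (0:ℝ) (mHalf P X),
        ((xMinus P X h).toReal, uMinus P X h) ∈ Gminus P X) ∧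
      Set.InjOn (fun h => ((xMinus P X h).toReal, uMinus P X h))
        (Set.Ioo (0:ℝ) (mHalf P X)) ∧
      (∀ p ∈ Gminus P X, hMinus P X p.1 p.2 ∈ Set.Ioo (0:ℝ) (mHalf P X) ∧
        ((xMinus P X (hMinus P X p.1 p.2)).toReal,
          uMinus P X (hMinus P X p.1 p.2)) = p) ∧
      (∀ h ∈ Set.Ioo (0:ℝ) (mHalf P X),
        hMinus P X (xMinus P X h).toReal (uMinus P X h) = h)) := by
  constructor
  · -- plus side
    have c4 : ∀ h ∈ Set.Ioo (0:ℝ) (mHalf P X),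
        hPlus P X (xPlus P X h).toReal (uPlus P X h) = h :=
      fun h hh => (plus_forward P X hXm hXint hXmean hh).2
    have c2 : Set.InjOn (fun h => ((xPlus P X h).toReal, uPlus P X h))
        (Set.Ioo (0:ℝ) (mHalf P X)) := by
      intro a ha b hb heq
      simp only [Prod.mk.injEq] at heq
      rw [← c4 a ha, ← c4 b hb, heq.1, heq.2]
    exact ⟨fun h hh => (plus_forward P X hXm hXint hXmean hh).1, c2,
      fun p hp => plus_surj P X hXm hXint hXmean hp, c4⟩
  · -- minus side
    have hXm' : Measurable (fun ω => -X ω) := hXm.neg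
    have hXint' : Integrable (fun ω => -X ω) P := hXint.neg
    have hXmean' : ∫ ω, -X ω ∂P = 0 := by rw [integral_neg, hXmean, neg_zero]
    have hmeq : mHalf P (fun ω => -X ω) = mHalf P X := mHalf_neg P X
    have htr : ∀ h : ℝ, (xMinus P X h).toReal = -(xPlus P (fun ω => -X ω) h).toReal :=
      fun h => by rw [xMinus_neg, EReal.toReal_neg_eq]
    have mc1 : ∀ h ∈ Set.Ioo (0:ℝ) (mHalf P X),
        ((xMinus P X h).toReal, uMinus P X h) ∈ Gminus P X := by
      intro h hh
      have hmem := (plus_forward P (fun ω => -X ω) hXm' hXint' hXmean'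
        (by rwa [hmeq])).1
      have hxpos : 0 < (xPlus P (fun ω => -X ω) h).toReal := hmem.1.1
      rw [mem_Gminus_iff]
      simp only [htr h, neg_neg]
      rwa [uMinus_neg P X hXm hXint hxpos]
    have mc4 : ∀ h ∈ Set.Ioo (0:ℝ) (mHalf P X),
        hMinus P X (xMinus P X h).toReal (uMinus P X h) = h := by
      intro h hh
      have hmem := (plus_forward P (fun ω => -X ω) hXm' hXint' hXmean'
        (by rwa [hmeq])).1
      have hxpos : 0 < (xPlus P (fun ω => -X ω) h).toReal := hmem.1.1
      rw [htr h, uMinus_neg P X hXm hXint hxpos,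
        hMinus_neg P X hXm hXint (by linarith) _, neg_neg]
      exact (plus_forward P (fun ω => -X ω) hXm' hXint' hXmean' (by rwa [hmeq])).2
    have mc2 : Set.InjOn (fun h => ((xMinus P X h).toReal, uMinus P X h))
        (Set.Ioo (0:ℝ) (mHalf P X)) := by
      intro a ha b hb heq
      simp only [Prod.mk.injEq] at heq
      rw [← mc4 a ha, ← mc4 b hb, heq.1, heq.2]
    refine ⟨mc1, mc2, ?_, mc4⟩
    intro p hp
    have hp' := (mem_Gminus_iff P X p).mp hp
    have hx0 : p.1 < 0 := by
      have h1 : 0 < -p.1 := hp'.1.1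
      linarith
    have hs := plus_surj P (fun ω => -X ω) hXm' hXint' hXmean' hp'
    simp only at hs
    have hhm : hMinus P X p.1 p.2 = hPlus P (fun ω => -X ω) (-p.1) p.2 :=
      hMinus_neg P X hXm hXint hx0 p.2
    have hxeq : (xPlus P (fun ω => -X ω) (hPlus P (fun ω => -X ω) (-p.1) p.2)).toReal
        = -p.1 := congrArg Prod.fst hs.2
    have hueq : uPlus P (fun ω => -X ω) (hPlus P (fun ω => -X ω) (-p.1) p.2) = p.2 :=
      congrArg Prod.snd hs.2
    have hxpos : 0 < (xPlus P (fun ω => -X ω)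
        (hPlus P (fun ω => -X ω) (-p.1) p.2)).toReal := by rw [hxeq]; linarith
    constructor
    · rw [hhm]
      rw [← hmeq]
      exact hs.1
    · rw [hhm]
      have h1 : (xMinus P X (hPlus P (fun ω => -X ω) (-p.1) p.2)).toReal = p.1 := by
        rw [htr, hxeq, neg_neg]
      have h2 : uMinus P X (hPlus P (fun ω => -X ω) (-p.1) p.2) = p.2 := by
        rw [uMinus_neg P X hXm hXint hxpos, hueq]
      rw [h1, h2]


end PinelisTtest
end
end

section
/- If w(h₂) = w(h₁) + ε for some ε ∈ [0,∞) and some h₁, h₂ ∈ [0,m], then 0 ≤ x_+(h₂) − x_+(h₁) ≤ ε and 0 ≤ x_−(h₁) − x_−(h₂) ≤ ε. -/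
open MeasureTheory ProbabilityTheory Set Filter Function
open scoped ENNReal NNReal Topology

noncomputable section

namespace PinelisTtest

variable {Ω : Type*} [MeasurableSpace Ω]

section AuxWEps
variable (P : Measure Ω) (X : Ω → ℝ)


lemma Gbar_coe (x : ℝ) : Gbar P X (x : EReal) = G P X x := by
  simp [Gbar, EReal.coe_ne_top, EReal.coe_ne_bot]

lemma xPlus_nonneg (h : ℝ) : 0 ≤ xPlus P X h := le_sInf fun x hx => hx.1

lemma xMinus_nonpos (h : ℝ) : xMinus P X h ≤ 0 := sSup_le fun x hx => hx.1

lemma xPlus_mono {h h' : ℝ} (hh : h ≤ h') : xPlus P X h ≤ xPlus P X h' :=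
  sInf_le_sInf fun x hx => ⟨hx.1, hh.trans hx.2⟩

lemma xMinus_anti {h h' : ℝ} (hh : h ≤ h') : xMinus P X h' ≤ xMinus P X h :=
  sSup_le_sSup fun x hx => ⟨hx.1, hh.trans hx.2⟩

lemma integral_posPart [IsProbabilityMeasure P] (hXint : Integrable X P)
    (hXmean : ∫ ω, X ω ∂P = 0) : ∫ ω, max (X ω) 0 ∂P = mHalf P X := by
  have hp : Integrable (fun ω => max (X ω) 0) P := hXint.pos_part
  have hn : Integrable (fun ω => max (-(X ω)) 0) P := hXint.neg.pos_part
  have habs : ∫ ω, |X ω| ∂P = (∫ ω, max (X ω) 0 ∂P) + ∫ ω, max (-(X ω)) 0 ∂P := by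
    rw [← integral_add hp hn]
    congr 1 with ω
    rw [abs_eq_max_neg]
    rcases le_total (X ω) 0 with h | h
    · simp [max_eq_right h, max_eq_left (neg_nonneg.2 h), h]
    · simp [max_eq_left h, max_eq_right (neg_nonpos.2 h), h]
  have key : ∀ x : ℝ, max x 0 - max (-x) 0 = x := by
    intro x
    rcases le_total x 0 with h | h
    · rw [max_eq_right h, max_eq_left (neg_nonneg.2 h)]; ring
    · rw [max_eq_left h, max_eq_right (neg_nonpos.2 h)]; ring
  have hsub : (∫ ω, max (X ω) 0 ∂P) - ∫ ω, max (-(X ω)) 0 ∂P = 0 := by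
    rw [← integral_sub hp hn]
    simp_rw [key]
    exact hXmean
  simp only [mHalf]
  linarith [habs, hsub]

lemma integral_negPart [IsProbabilityMeasure P] (hXint : Integrable X P)
    (hXmean : ∫ ω, X ω ∂P = 0) : ∫ ω, max (-(X ω)) 0 ∂P = mHalf P X := by
  have := integral_posPart P (fun ω => -(X ω)) hXint.neg (by rw [integral_neg, hXmean, neg_zero])
  simp only [mHalf, abs_neg] at this ⊢
  exact this


lemma tendsto_G_pos [IsProbabilityMeasure P] (hXm : Measurable X) (hXint : Integrable X P) :
    Tendsto (fun n : ℕ => G P X n) atTop (𝓝 (∫ ω, max (X ω) 0 ∂P)) := by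
  have hG : ∀ n : ℕ, G P X n = ∫ ω, (if X ω ∈ Set.Ioc (0:ℝ) n then X ω else 0) ∂P := by
    intro n; rw [G, if_pos (by positivity)]
  simp_rw [hG]
  apply tendsto_integral_of_dominated_convergence (fun ω => |X ω|)
  · intro n
    exact ((hXm.ite (hXm measurableSet_Ioc) measurable_const)).aestronglyMeasurable
  · exact hXint.abs
  · intro n
    filter_upwards with ω
    split_ifs
    · simp [Real.norm_eq_abs]
    · simp [abs_nonneg]
  · filter_upwards with ω
    rcases le_or_gt (X ω) 0 with h | h
    · have : ∀ n : ℕ, (if X ω ∈ Set.Ioc (0:ℝ) n then X ω else 0) = 0 := by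
        intro n
        rw [if_neg]
        simp only [Set.mem_Ioc, not_and_or, not_lt]
        exact Or.inl h
      rw [funext this, max_eq_right h]
      exact tendsto_const_nhds
    · have ev : ∀ᶠ n : ℕ in atTop, (if X ω ∈ Set.Ioc (0:ℝ) n then X ω else 0) = X ω := by
        filter_upwards [eventually_ge_atTop ⌈X ω⌉₊] with n hn
        exact if_pos ⟨h, (Nat.le_ceil _).trans (by exact_mod_cast hn)⟩
      rw [max_eq_left h.le]
      exact Tendsto.congr' (ev.mono fun n hn => hn.symm) tendsto_const_nhds

lemma tendsto_G_neg [IsProbabilityMeasure P] (hXm : Measurable X) (hXint : Integrable X P) :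
    Tendsto (fun n : ℕ => G P X (-(n:ℝ) - 1)) atTop (𝓝 (∫ ω, max (-(X ω)) 0 ∂P)) := by
  have hG : ∀ n : ℕ, G P X (-(n:ℝ) - 1)
      = ∫ ω, (if X ω ∈ Set.Ico (-(n:ℝ) - 1) (0:ℝ) then -(X ω) else 0) ∂P := by
    intro n
    rw [G, if_neg (by push_neg; have : (0:ℝ) ≤ n := Nat.cast_nonneg n; linarith)]
  simp_rw [hG]
  apply tendsto_integral_of_dominated_convergence (fun ω => |X ω|)
  · intro n
    exact ((hXm.neg.ite (hXm measurableSet_Ico) measurable_const)).aestronglyMeasurable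
  · exact hXint.abs
  · intro n
    filter_upwards with ω
    split_ifs
    · simp [Real.norm_eq_abs]
    · simp [abs_nonneg]
  · filter_upwards with ω
    rcases le_or_gt 0 (X ω) with h | h
    · have : ∀ n : ℕ, (if X ω ∈ Set.Ico (-(n:ℝ) - 1) (0:ℝ) then -(X ω) else 0) = 0 := by
        intro n
        rw [if_neg]
        simp only [Set.mem_Ico, not_and_or, not_lt]
        exact Or.inr h
      rw [funext this, max_eq_right (neg_nonpos.2 h)]
      exact tendsto_const_nhds
    · have ev : ∀ᶠ n : ℕ in atTop,
          (if X ω ∈ Set.Ico (-(n:ℝ) - 1) (0:ℝ) then -(X ω) else 0) = -(X ω) := by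
        filter_upwards [eventually_ge_atTop ⌈-(X ω)⌉₊] with n hn
        refine if_pos ⟨?_, h⟩
        have h1 : -(X ω) ≤ ⌈-(X ω)⌉₊ := Nat.le_ceil _
        have h2 : (⌈-(X ω)⌉₊ : ℝ) ≤ n := by exact_mod_cast hn
        linarith
      rw [max_eq_left (neg_nonneg.2 h.le)]
      exact Tendsto.congr' (ev.mono fun n hn => hn.symm) tendsto_const_nhds

lemma xPlus_ne_top [IsProbabilityMeasure P] (hXm : Measurable X) (hXint : Integrable X P)
    (hXmean : ∫ ω, X ω ∂P = 0) {h : ℝ} (hlt : h < mHalf P X) : xPlus P X h ≠ ⊤ := by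
  have ht := tendsto_G_pos P X hXm hXint
  rw [integral_posPart P X hXint hXmean] at ht
  obtain ⟨n, hn⟩ := (ht.eventually (eventually_ge_nhds hlt)).exists
  have hle : xPlus P X h ≤ ((n:ℝ) : EReal) :=
    sInf_le ⟨by exact_mod_cast (Nat.cast_nonneg n : (0:ℝ) ≤ n), by rwa [Gbar_coe]⟩
  exact (hle.trans_lt (EReal.coe_lt_top _)).ne

lemma xMinus_ne_bot [IsProbabilityMeasure P] (hXm : Measurable X) (hXint : Integrable X P)
    (hXmean : ∫ ω, X ω ∂P = 0) {h : ℝ} (hlt : h < mHalf P X) : xMinus P X h ≠ ⊥ := by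
  have ht := tendsto_G_neg P X hXm hXint
  rw [integral_negPart P X hXint hXmean] at ht
  obtain ⟨n, hn⟩ := (ht.eventually (eventually_ge_nhds hlt)).exists
  have hle : ((-(n:ℝ) - 1 : ℝ) : EReal) ≤ xMinus P X h := by
    refine le_sSup ⟨?_, by rwa [Gbar_coe]⟩
    exact_mod_cast (by have : (0:ℝ) ≤ n := Nat.cast_nonneg n; linarith : -(n:ℝ) - 1 ≤ 0)
  exact ((EReal.bot_lt_coe _).trans_le hle).ne'

lemma self_le_add_eps (a : EReal) {ε : ℝ} (hε : 0 ≤ ε) : a ≤ a + (ε : EReal) := by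
  nth_rewrite 1 [← add_zero a]
  exact add_le_add (le_refl a) (by exact_mod_cast hε)

end AuxWEps

lemma xPlus_ne_bot (P : Measure Ω) (X : Ω → ℝ) (h : ℝ) : xPlus P X h ≠ ⊥ :=
  ((bot_lt_iff_ne_bot.2 (by simp)).trans_le (xPlus_nonneg P X h)).ne'

lemma xMinus_ne_top (P : Measure Ω) (X : Ω → ℝ) (h : ℝ) : xMinus P X h ≠ ⊤ :=
  ((xMinus_nonpos P X h).trans_lt EReal.zero_lt_top).ne

lemma wFun_eq_top_of_xPlus (P : Measure Ω) (X : Ω → ℝ) {h : ℝ} (ht : xPlus P X h = ⊤) :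
    wFun P X h = ⊤ := by
  rw [wFun, ht, sub_eq_add_neg, EReal.top_add_of_ne_bot]
  rw [Ne, EReal.neg_eq_bot_iff]
  exact xMinus_ne_top P X h

lemma wFun_eq_top_of_xMinus (P : Measure Ω) (X : Ω → ℝ) {h : ℝ} (hb : xMinus P X h = ⊥) :
    wFun P X h = ⊤ := by
  rw [wFun, hb, EReal.sub_bot (xPlus_ne_bot P X h)]


/-- Lemma `w,eps` of the paper. The conclusions
`0 ≤ x_+(h₂) - x_+(h₁) ≤ ε` and `0 ≤ x_-(h₁) - x_-(h₂) ≤ ε` are stated in the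
subtraction-free form `x_+(h₁) ≤ x_+(h₂) ≤ x_+(h₁) + ε`, etc., which is the correct
rendering in the extended real line. -/
theorem w_eps
    (P : Measure Ω) [IsProbabilityMeasure P] (X : Ω → ℝ)
    (hXm : Measurable X) (hXint : Integrable X P)
    (hXmean : ∫ ω, X ω ∂P = 0) (hX0 : P {ω | X ω = 0} ≠ 1)
    (ε : ℝ) (hε : 0 ≤ ε) (h₁ h₂ : ℝ)
    (hh₁ : h₁ ∈ Set.Icc (0:ℝ) (mHalf P X)) (hh₂ : h₂ ∈ Set.Icc (0:ℝ) (mHalf P X))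
    (hw : wFun P X h₂ = wFun P X h₁ + (ε : EReal)) :
    (xPlus P X h₁ ≤ xPlus P X h₂ ∧ xPlus P X h₂ ≤ xPlus P X h₁ + (ε : EReal)) ∧
    (xMinus P X h₂ ≤ xMinus P X h₁ ∧ xMinus P X h₁ ≤ xMinus P X h₂ + (ε : EReal)) := by
  rcases lt_trichotomy h₁ h₂ with hlt | heq | hgt
  · -- h₁ < h₂ ≤ m, so h₁ < m and the h₁-quantities are finite
    have h1m : h₁ < mHalf P X := hlt.trans_le hh₂.2
    have ha1t : xPlus P X h₁ ≠ ⊤ := xPlus_ne_top P X hXm hXint hXmean h1m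
    have hb1b : xMinus P X h₁ ≠ ⊥ := xMinus_ne_bot P X hXm hXint hXmean h1m
    have ea1 : ((xPlus P X h₁).toReal : EReal) = xPlus P X h₁ :=
      EReal.coe_toReal ha1t (xPlus_ne_bot P X h₁)
    have eb1 : ((xMinus P X h₁).toReal : EReal) = xMinus P X h₁ :=
      EReal.coe_toReal (xMinus_ne_top P X h₁) hb1b
    set a₁ := (xPlus P X h₁).toReal
    set b₁ := (xMinus P X h₁).toReal
    have hw1 : wFun P X h₁ = ((a₁ - b₁ : ℝ) : EReal) := by
      rw [wFun, ← ea1, ← eb1, EReal.coe_sub]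
    have hw' : wFun P X h₂ = ((a₁ - b₁ + ε : ℝ) : EReal) := by
      rw [hw, hw1, EReal.coe_add]
    have ha2t : xPlus P X h₂ ≠ ⊤ := by
      intro h
      rw [wFun_eq_top_of_xPlus P X h] at hw'
      exact (EReal.coe_ne_top _) hw'.symm
    have hb2b : xMinus P X h₂ ≠ ⊥ := by
      intro h
      rw [wFun_eq_top_of_xMinus P X h] at hw'
      exact (EReal.coe_ne_top _) hw'.symm
    have ea2 : ((xPlus P X h₂).toReal : EReal) = xPlus P X h₂ :=
      EReal.coe_toReal ha2t (xPlus_ne_bot P X h₂)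
    have eb2 : ((xMinus P X h₂).toReal : EReal) = xMinus P X h₂ :=
      EReal.coe_toReal (xMinus_ne_top P X h₂) hb2b
    set a₂ := (xPlus P X h₂).toReal
    set b₂ := (xMinus P X h₂).toReal
    have hw2 : wFun P X h₂ = ((a₂ - b₂ : ℝ) : EReal) := by
      rw [wFun, ← ea2, ← eb2, EReal.coe_sub]
    have key : a₂ - b₂ = a₁ - b₁ + ε := by
      rw [hw2] at hw'; exact_mod_cast hw'
    have hma : a₁ ≤ a₂ := by
      have := xPlus_mono P X hlt.le
      rw [← ea1, ← ea2] at this; exact_mod_cast this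
    have hmb : b₂ ≤ b₁ := by
      have := xMinus_anti P X hlt.le
      rw [← eb1, ← eb2] at this; exact_mod_cast this
    refine ⟨⟨?_, ?_⟩, ⟨?_, ?_⟩⟩
    · rw [← ea1, ← ea2]; exact_mod_cast hma
    · rw [← ea1, ← ea2, ← EReal.coe_add]
      exact_mod_cast (by linarith : a₂ ≤ a₁ + ε)
    · rw [← eb1, ← eb2]; exact_mod_cast hmb
    · rw [← eb1, ← eb2, ← EReal.coe_add]
      exact_mod_cast (by linarith : b₁ ≤ b₂ + ε)
  · subst heq
    exact ⟨⟨le_refl _, self_le_add_eps _ hε⟩, ⟨le_refl _, self_le_add_eps _ hε⟩⟩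
  · -- h₂ < h₁ ≤ m, so h₂ < m and the h₂-quantities are finite
    have h2m : h₂ < mHalf P X := hgt.trans_le hh₁.2
    have ha2t : xPlus P X h₂ ≠ ⊤ := xPlus_ne_top P X hXm hXint hXmean h2m
    have hb2b : xMinus P X h₂ ≠ ⊥ := xMinus_ne_bot P X hXm hXint hXmean h2m
    have ea2 : ((xPlus P X h₂).toReal : EReal) = xPlus P X h₂ :=
      EReal.coe_toReal ha2t (xPlus_ne_bot P X h₂)
    have eb2 : ((xMinus P X h₂).toReal : EReal) = xMinus P X h₂ :=
      EReal.coe_toReal (xMinus_ne_top P X h₂) hb2b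
    set a₂ := (xPlus P X h₂).toReal
    set b₂ := (xMinus P X h₂).toReal
    have hw2 : wFun P X h₂ = ((a₂ - b₂ : ℝ) : EReal) := by
      rw [wFun, ← ea2, ← eb2, EReal.coe_sub]
    have ha1t : xPlus P X h₁ ≠ ⊤ := by
      intro h
      rw [wFun_eq_top_of_xPlus P X h, EReal.top_add_of_ne_bot (EReal.coe_ne_bot ε), hw2] at hw
      exact (EReal.coe_ne_top _) hw
    have hb1b : xMinus P X h₁ ≠ ⊥ := by
      intro h
      rw [wFun_eq_top_of_xMinus P X h, EReal.top_add_of_ne_bot (EReal.coe_ne_bot ε), hw2] at hw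
      exact (EReal.coe_ne_top _) hw
    have ea1 : ((xPlus P X h₁).toReal : EReal) = xPlus P X h₁ :=
      EReal.coe_toReal ha1t (xPlus_ne_bot P X h₁)
    have eb1 : ((xMinus P X h₁).toReal : EReal) = xMinus P X h₁ :=
      EReal.coe_toReal (xMinus_ne_top P X h₁) hb1b
    set a₁ := (xPlus P X h₁).toReal
    set b₁ := (xMinus P X h₁).toReal
    have hw1 : wFun P X h₁ = ((a₁ - b₁ : ℝ) : EReal) := by
      rw [wFun, ← ea1, ← eb1, EReal.coe_sub]
    have key : a₂ - b₂ = a₁ - b₁ + ε := by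
      rw [hw2, hw1, ← EReal.coe_add] at hw; exact_mod_cast hw
    have hma : a₂ ≤ a₁ := by
      have := xPlus_mono P X hgt.le
      rw [← ea1, ← ea2] at this; exact_mod_cast this
    have hmb : b₁ ≤ b₂ := by
      have := xMinus_anti P X hgt.le
      rw [← eb1, ← eb2] at this; exact_mod_cast this
    refine ⟨⟨?_, ?_⟩, ⟨?_, ?_⟩⟩
    · rw [← ea1, ← ea2]; exact_mod_cast (by linarith : a₁ ≤ a₂)
    · rw [← ea1, ← ea2, ← EReal.coe_add]
      exact_mod_cast (by linarith : a₂ ≤ a₁ + ε)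
    · rw [← eb1, ← eb2]; exact_mod_cast (by linarith : b₂ ≤ b₁)
    · rw [← eb1, ← eb2, ← EReal.coe_add]
      exact_mod_cast (by linarith : b₁ ≤ b₂ + ε)


end PinelisTtest
end
end
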